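/- Every left alternative CA-AG-groupoid is nuclear square; that is, if a magma S satisfies the left invertive law, cyclic associativity, and the left alternative law (a·a)·b = a·(a·b) for all a,b, then S satisfies all three identities: (a·a)·(b·c) = ((a·a)·b)·c, a·((b·b)·c) = (a·(b·b))·c, and (a·b)·(c·c) = a·(b·(c·c)) for all a,b,c in S. -/
import Mathlib


theorem left_alternative_CA_AG_groupoid_is_nuclear_square {S : Type*} [Mul S]
    (li : ∀ a b c : S, (a * b) * c = (c * b) * a)
    (ca : ∀ a b c : S, a * (b * c) = c * (a * b))
    (la : ∀ a b : S, (a * a) * b = a * (a * b)) :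
    (∀ a b c : S, (a * a) * (b * c) = ((a * a) * b) * c) ∧
    (∀ a b c : S, a * ((b * b) * c) = (a * (b * b)) * c) ∧
    (∀ a b c : S, (a * b) * (c * c) = a * (b * (c * c))) := by
  refine ⟨fun a b c => ?_, fun a b c => ?_, fun a b c => ?_⟩
  · calc (a * a) * (b * c) = b * (c * (a * a)) := (ca b c (a*a)).symm
      _ = b * (a * (c * a)) := by rw [ca c a a]
      _ = (c * a) * (b * a) := ca b a (c*a)
      _ = ((b * a) * a) * c := (li (b*a) a c).symm
      _ = ((a * a) * b) * c := by rw [li b a a]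
  · calc a * ((b * b) * c) = (b * b) * (c * a) := (ca (b*b) c a).symm
      _ = b * (b * (c * a)) := la b (c*a)
      _ = (c * a) * (b * b) := ca b b (c*a)
      _ = ((b * b) * a) * c := (li (b*b) a c).symm
      _ = (b * (b * a)) * c := by rw [la b a]
      _ = (a * (b * b)) * c := by rw [ca b b a]
  · calc (a * b) * (c * c) = c * (c * (a * b)) := (ca c c (a*b)).symm
      _ = (c * c) * (a * b) := (la c (a*b)).symm
      _ = a * (b * (c * c)) := (ca a b (c*c)).symm
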